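/- The series ∑_{k ∈ ℤ² \ {0}} (1/(2|k|²))(1 − exp(−2|k|⁴ t)) diverges to infinity for every t > 0. -/

import Mathlib

open scoped ENNReal

/-- Euclidean norm of a lattice point in `ℤ²`. -/
noncomputable def latNorm (m : ℤ × ℤ) : ℝ :=
  Real.sqrt ((m.1 : ℝ)^2 + (m.2 : ℝ)^2)

lemma latNorm_sq (m : ℤ × ℤ) : latNorm m ^ 2 = (m.1 : ℝ)^2 + (m.2 : ℝ)^2 := by
  rw [latNorm, Real.sq_sqrt (by positivity)]

lemma one_le_latNorm_sq {m : ℤ × ℤ} (hm : m ≠ 0) : 1 ≤ latNorm m ^ 2 := by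
  rw [latNorm_sq]
  by_cases h1 : m.1 = 0
  · have h2 : m.2 ≠ 0 := fun hz => hm (Prod.ext h1 hz)
    have : (1 : ℤ) ≤ m.2 ^ 2 := by nlinarith [Int.one_le_abs h2, sq_abs m.2]
    have : (1 : ℝ) ≤ (m.2 : ℝ) ^ 2 := by exact_mod_cast this
    nlinarith [sq_nonneg (m.1 : ℝ)]
  · have : (1 : ℤ) ≤ m.1 ^ 2 := by nlinarith [Int.one_le_abs h1, sq_abs m.1]
    have : (1 : ℝ) ≤ (m.1 : ℝ) ^ 2 := by exact_mod_cast this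
    nlinarith [sq_nonneg (m.2 : ℝ)]

lemma harmonic_ofReal_tsum_eq_top {c : ℝ} (hc : 0 < c) :
    (∑' a : ℕ, ENNReal.ofReal (c / (4 * ((a : ℝ) + 1)))) = ∞ := by
  by_contra hfin
  have hsum := ENNReal.summable_toNNReal_of_tsum_ne_top hfin
  have hsumR : Summable (fun a : ℕ => c / (4 * ((a : ℝ) + 1))) := by
    have h1 := NNReal.summable_coe.mpr hsum
    refine h1.congr fun a => ?_
    simp only [Function.comp, ENNReal.ofReal, ENNReal.toNNReal_coe]
    exact Real.coe_toNNReal _ (by positivity)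
  have h2 : Summable (fun a : ℕ => 1 / ((a : ℝ) + 1)) := by
    have := hsumR.mul_left (4 / c)
    have heq : ∀ a : ℕ, (4 / c) * (c / (4 * ((a : ℝ) + 1))) = 1 / ((a : ℝ) + 1) := by
      intro a; field_simp
    simpa [heq] using this
  have h3 : Summable (fun n : ℕ => 1 / ((n : ℝ))) := by
    rw [← summable_nat_add_iff 1]
    convert h2 using 2 with a
    · rfl
    push_cast; ring
  exact Real.not_summable_one_div_natCast h3

/-- The series `∑_{k ≠ 0} (1/(2|k|²))(1 − exp(−2|k|⁴ t))`, which equals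
`E[‖∇z(t)‖²_{L²}]` for the stochastic convolution `z`, diverges for every `t > 0`. -/
theorem gradient_second_moment_diverges (t : ℝ) (ht : 0 < t) :
    (∑' k : {k : ℤ × ℤ // k ≠ 0},
      ENNReal.ofReal ((1 / (2 * latNorm k.1 ^ 2)) * (1 - Real.exp (-2 * latNorm k.1 ^ 4 * t))))
      = ∞ := by
  set c : ℝ := 1 - Real.exp (-2 * t) with hcdef
  have hc : 0 < c := by
    have : Real.exp (-2 * t) < 1 := by
      rw [Real.exp_lt_one_iff]; nlinarith
    simp only [hcdef]; linarith
  -- termwise lower bound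
  have key : ∀ k : {k : ℤ × ℤ // k ≠ 0},
      ENNReal.ofReal (c / (2 * latNorm k.1 ^ 2)) ≤
      ENNReal.ofReal ((1 / (2 * latNorm k.1 ^ 2)) * (1 - Real.exp (-2 * latNorm k.1 ^ 4 * t))) := by
    intro k
    apply ENNReal.ofReal_le_ofReal
    have hq : 1 ≤ latNorm k.1 ^ 2 := one_le_latNorm_sq k.2
    have hq4 : 1 ≤ latNorm k.1 ^ 4 := by nlinarith
    have hexp : Real.exp (-2 * latNorm k.1 ^ 4 * t) ≤ Real.exp (-2 * t) := by
      apply Real.exp_le_exp.mpr; nlinarith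
    have hub : c ≤ 1 - Real.exp (-2 * latNorm k.1 ^ 4 * t) := by
      simp only [hcdef]; linarith
    have hpos : (0 : ℝ) < 2 * latNorm k.1 ^ 2 := by linarith
    rw [div_eq_mul_inv, ← one_div, mul_comm]
    exact mul_le_mul_of_nonneg_left hub (by positivity)
  rw [eq_top_iff]
  calc (∞ : ℝ≥0∞) = ∑' a : ℕ, ENNReal.ofReal (c / (4 * ((a : ℝ) + 1))) :=
        (harmonic_ofReal_tsum_eq_top hc).symm
    _ ≤ ∑' (a : ℕ) (b : ℕ),
        ENNReal.ofReal (c / (2 * (((a : ℝ) + 1) ^ 2 + ((b : ℝ) + 1) ^ 2))) := by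
        apply ENNReal.tsum_le_tsum
        intro a
        calc ENNReal.ofReal (c / (4 * ((a : ℝ) + 1)))
            = ∑ _b ∈ Finset.range (a + 1),
                ENNReal.ofReal (c / (4 * ((a : ℝ) + 1) ^ 2)) := by
              rw [Finset.sum_const, Finset.card_range, nsmul_eq_mul,
                ← ENNReal.ofReal_natCast, ← ENNReal.ofReal_mul (by positivity)]
              congr 1
              have ha : (0 : ℝ) < (a : ℝ) + 1 := by positivity
              push_cast
              field_simp
          _ ≤ ∑ b ∈ Finset.range (a + 1),
                ENNReal.ofReal (c / (2 * (((a : ℝ) + 1) ^ 2 + ((b : ℝ) + 1) ^ 2))) := by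
              apply Finset.sum_le_sum
              intro b hb
              apply ENNReal.ofReal_le_ofReal
              apply div_le_div_of_nonneg_left hc.le (by positivity)
              have hb' : (b : ℝ) ≤ (a : ℝ) := by
                exact_mod_cast Nat.lt_succ_iff.mp (Finset.mem_range.mp hb)
              nlinarith
          _ ≤ ∑' b : ℕ,
                ENNReal.ofReal (c / (2 * (((a : ℝ) + 1) ^ 2 + ((b : ℝ) + 1) ^ 2))) :=
              ENNReal.sum_le_tsum _
    _ = ∑' p : ℕ × ℕ,
        ENNReal.ofReal (c / (2 * (((p.1 : ℝ) + 1) ^ 2 + ((p.2 : ℝ) + 1) ^ 2))) :=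
        (ENNReal.tsum_prod' (f := fun p : ℕ × ℕ =>
          ENNReal.ofReal (c / (2 * (((p.1 : ℝ) + 1) ^ 2 + ((p.2 : ℝ) + 1) ^ 2))))).symm
    _ ≤ ∑' k : {k : ℤ × ℤ // k ≠ 0}, ENNReal.ofReal (c / (2 * latNorm k.1 ^ 2)) := by
        have hι : Function.Injective
            (fun p : ℕ × ℕ => (⟨((p.1 : ℤ) + 1, (p.2 : ℤ) + 1), by
              simp [Prod.ext_iff]; omega⟩ : {k : ℤ × ℤ // k ≠ 0})) := by
          intro p q h
          simp only [Subtype.mk.injEq, Prod.ext_iff] at h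
          exact Prod.ext (by omega) (by omega)
        have := ENNReal.tsum_comp_le_tsum_of_injective hι
          (fun k : {k : ℤ × ℤ // k ≠ 0} => ENNReal.ofReal (c / (2 * latNorm k.1 ^ 2)))
        refine le_trans (le_of_eq ?_) this
        apply tsum_congr
        intro p
        congr 2
        rw [latNorm_sq]
        push_cast
        ring
    _ ≤ _ := ENNReal.tsum_le_tsum key
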